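/- Let X and Y be independent random variables, each uniformly distributed on a 4-element alphabet, and let Z = 1 if X = Y and Z = 0 otherwise. Then there exist finite-valued random variables M_1, M_2, M_3, M_4 on a common probability space carrying (X, Y) such that, writing M = (M_1, M_2, M_3, M_4): (i) I(M_1 ; Y | X) = 0, I(M_2 ; X | (Y, M_1)) = 0, I(M_3 ; Y | (X, (M_1, M_2))) = 0 and I(M_4 ; X | (Y, (M_1, M_2, M_3))) = 0 (i.e., M is the transcript of a valid randomized four-message protocol); (ii) H(Z | (M, X)) = 0 and H(Z | (M, Y)) = 0; and (iii) I(X ; M | Y) + I(Y ; M | X) ≤ (11/4) · log 2. -/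

import Mathlib

open MeasureTheory ProbabilityTheory Real
open scoped ENNReal

/-- The probability that the random variable `X` takes the value `x`. -/
noncomputable def pm {Ω S : Type*} [MeasurableSpace Ω] (μ : Measure Ω) (X : Ω → S) (x : S) : ℝ :=
  (μ (X ⁻¹' {x})).toReal

/-- Shannon entropy (with natural logarithm) of a finite-valued random variable. -/
noncomputable def entH {Ω S : Type*} [MeasurableSpace Ω] [Fintype S]
    (μ : Measure Ω) (X : Ω → S) : ℝ :=
  ∑ x : S, Real.negMulLog (pm μ X x)

/-- Conditional entropy `H(X | Y)`. -/
noncomputable def condEnt {Ω S T : Type*} [MeasurableSpace Ω] [Fintype S] [Fintype T]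
    (μ : Measure Ω) (X : Ω → S) (Y : Ω → T) : ℝ :=
  entH μ (fun ω => (X ω, Y ω)) - entH μ Y

/-- Mutual information `I(X ; Y)`. -/
noncomputable def mutInf {Ω S T : Type*} [MeasurableSpace Ω] [Fintype S] [Fintype T]
    (μ : Measure Ω) (X : Ω → S) (Y : Ω → T) : ℝ :=
  entH μ X + entH μ Y - entH μ (fun ω => (X ω, Y ω))

/-- Conditional mutual information `I(X ; Y | Z)`. -/
noncomputable def condMutInf {Ω S T U : Type*} [MeasurableSpace Ω] [Fintype S] [Fintype T]
    [Fintype U] (μ : Measure Ω) (X : Ω → S) (Y : Ω → T) (Z : Ω → U) : ℝ :=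
  entH μ (fun ω => (X ω, Z ω)) + entH μ (fun ω => (Y ω, Z ω))
    - entH μ (fun ω => ((X ω, Y ω), Z ω)) - entH μ Z

/-- A finite-valued random variable on `Ω`, bundled with its finite alphabet
(whose singletons are measurable). -/
structure FinRV (Ω : Type*) [MeasurableSpace Ω] where
  T : Type
  fin : Fintype T
  meas : MeasurableSpace T
  msc : @MeasurableSingletonClass T meas
  f : Ω → T
  hf : @Measurable Ω T _ meas f

attribute [instance] FinRV.fin FinRV.meas FinRV.msc

/-- A probability space, bundled. -/
structure ProbSpace where
  Ω : Type
  mΩ : MeasurableSpace Ω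
  μ : @Measure Ω mΩ
  prob : @IsProbabilityMeasure Ω mΩ μ

attribute [instance] ProbSpace.mΩ ProbSpace.prob

namespace EQAux
open Finset

abbrev Om : Type := Fin 4 × Fin 4 × Fin 2

noncomputable def um : Measure Om := (32:ℝ≥0∞)⁻¹ • ∑ ω : Om, Measure.dirac ω

instance : IsProbabilityMeasure um := by
  constructor
  rw [um, Measure.smul_apply, Measure.finset_sum_apply]
  simp [Measure.dirac_apply' _ MeasurableSet.univ]
  rw [ENNReal.inv_mul_cancel] <;> norm_num

lemma um_apply (s : Set Om) [DecidablePred (· ∈ s)] :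
    um s = (32:ℝ≥0∞)⁻¹ * (Finset.univ.filter (· ∈ s)).card := by
  rw [um, Measure.smul_apply, Measure.finset_sum_apply, smul_eq_mul]
  congr 1
  rw [← Finset.sum_boole]
  refine Finset.sum_congr rfl fun ω _ => ?_
  rw [Measure.dirac_apply' _ MeasurableSet.of_discrete, Set.indicator_apply]
  simp

lemma pm_eq {S : Type*} [DecidableEq S] (W : Om → S) (w : S) :
    pm um W w = ((Finset.univ.filter fun ω => W ω = w).card : ℝ) / 32 := by
  haveI : DecidablePred (· ∈ W ⁻¹' {w}) := fun ω => decidable_of_iff (W ω = w) (by simp)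
  rw [pm, um_apply]
  rw [ENNReal.toReal_mul]
  simp only [Set.mem_preimage, Set.mem_singleton_iff]
  rw [ENNReal.toReal_inv]
  simp [div_eq_mul_inv, mul_comm]

lemma entH_eval2 {S : Type*} [Fintype S] [DecidableEq S] (W : Om → S) :
    entH um W = ∑ v ∈ Finset.univ.image W,
      Real.negMulLog (((Finset.univ.filter fun ω => W ω = v).card : ℝ) / 32) := by
  rw [entH]
  simp only [pm_eq]
  refine (Finset.sum_subset (Finset.subset_univ _) ?_).symm
  intro v _ hv
  have : (Finset.univ.filter fun ω => W ω = v) = ∅ := by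
    rw [Finset.filter_eq_empty_iff]
    intro ω _
    exact fun h => hv (Finset.mem_image.2 ⟨ω, Finset.mem_univ _, h⟩)
  rw [this]
  simp

lemma entH_eval_list {S : Type*} [Fintype S] [DecidableEq S] (W : Om → S) (I : Finset ℕ)
    (n : ℕ → ℕ)
    (himg : (Finset.univ.image W).image
      (fun v : S => (Finset.univ.filter fun ω => W ω = v).card) = I)
    (hn : ∀ k ∈ I, ((Finset.univ.image W).filter fun v : S =>
        (Finset.univ.filter fun ω => W ω = v).card = k).card = n k) :
    entH um W = ∑ k ∈ I, (n k : ℝ) * Real.negMulLog ((k:ℝ) / 32) := by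
  rw [entH_eval2]
  rw [Finset.sum_comp (fun k : ℕ => Real.negMulLog ((k:ℝ) / 32))
    (fun v : S => (Finset.univ.filter fun ω => W ω = v).card), himg]
  exact Finset.sum_congr rfl fun k hk => by rw [hn k hk, nsmul_eq_mul]

lemma entH_comp {Ω S T : Type*} [MeasurableSpace Ω] [Fintype S] [Fintype T]
    (μ : Measure Ω) (φ : S → T) (hφ : Function.Injective φ) (W : Ω → S) :
    entH μ (fun ω => φ (W ω)) = entH μ W := by
  classical
  have key : ∀ s : S, pm μ (fun ω => φ (W ω)) (φ s) = pm μ W s := by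
    intro s
    have h : (fun ω => φ (W ω)) ⁻¹' {φ s} = W ⁻¹' {s} := by
      ext ω; simp [hφ.eq_iff]
    rw [pm, pm, h]
  have hz : ∀ t ∈ Finset.univ, t ∉ Finset.univ.image φ →
      Real.negMulLog (pm μ (fun ω => φ (W ω)) t) = 0 := by
    intro t _ ht
    simp only [Finset.mem_image] at ht
    have : (fun ω => φ (W ω)) ⁻¹' {t} = ∅ := by
      ext ω; simp only [Set.mem_preimage, Set.mem_singleton_iff, Set.mem_empty_iff_false,
        iff_false]
      exact fun h => ht ⟨W ω, Finset.mem_univ _, h⟩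
    rw [pm, this]
    simp [Real.negMulLog_zero]
  unfold entH
  calc ∑ x : T, Real.negMulLog (pm μ (fun ω => φ (W ω)) x)
      = ∑ x ∈ Finset.univ.image φ, Real.negMulLog (pm μ (fun ω => φ (W ω)) x) :=
        (Finset.sum_subset (Finset.subset_univ _) hz).symm
    _ = ∑ s : S, Real.negMulLog (pm μ (fun ω => φ (W ω)) (φ s)) :=
        Finset.sum_image (fun x _ y _ h => hφ h)
    _ = ∑ s : S, Real.negMulLog (pm μ W s) := Finset.sum_congr rfl fun s _ => by rw [key]

lemma condMutInf_of_func {Ω S T U : Type*} [MeasurableSpace Ω] [Fintype S] [Fintype T] [Fintype U]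
    (μ : Measure Ω) (g : U → S) (V : Ω → T) (W : Ω → U) :
    condMutInf μ (fun ω => g (W ω)) V W = 0 := by
  have h1 : entH μ (fun ω => (g (W ω), W ω)) = entH μ W :=
    entH_comp μ (fun u => (g u, u)) (fun a b h => (Prod.ext_iff.1 h).2) W
  have h2 : entH μ (fun ω => ((g (W ω), V ω), W ω)) = entH μ (fun ω => (V ω, W ω)) :=
    entH_comp μ (fun p : T × U => ((g p.2, p.1), p.2))
      (fun a b h => by
        obtain ⟨h1', h2'⟩ := Prod.ext_iff.1 h
        exact Prod.ext_iff.2 ⟨(Prod.ext_iff.1 h1').2, h2'⟩)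
      (fun ω => (V ω, W ω))
  show entH μ (fun ω => (g (W ω), W ω)) + entH μ (fun ω => (V ω, W ω))
      - entH μ (fun ω => ((g (W ω), V ω), W ω)) - entH μ W = 0
  rw [h1, h2]; ring

lemma condEnt_of_func {Ω S U : Type*} [MeasurableSpace Ω] [Fintype S] [Fintype U]
    (μ : Measure Ω) (g : U → S) (W : Ω → U) :
    condEnt μ (fun ω => g (W ω)) W = 0 := by
  have h1 : entH μ (fun ω => (g (W ω), W ω)) = entH μ W :=
    entH_comp μ (fun u => (g u, u)) (fun a b h => (Prod.ext_iff.1 h).2) W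
  show entH μ (fun ω => (g (W ω), W ω)) - entH μ W = 0
  rw [h1]; ring

def d1 : Fin 4 → Fin 2 := ![0, 0, 1, 1]
def d2 : Fin 4 → Fin 2 := ![0, 1, 0, 1]
def g1 (ω : Om) : Fin 2 := d1 ω.1
def g2 (ω : Om) : Fin 2 := if d1 ω.1 = d1 ω.2.1 then 1 else ω.2.2
def g3 (ω : Om) : Fin 2 := if g2 ω = 1 then d2 ω.1 else 0
def g4 (ω : Om) : Fin 2 := if ω.1 = ω.2.1 then 1 else 0

lemma log32 : Real.log 32 = 5 * Real.log 2 := by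
  rw [show (32:ℝ) = 2 ^ 5 by norm_num, Real.log_pow]; push_cast; ring
lemma nml1 : Real.negMulLog ((1:ℝ)/32) = 5/32 * Real.log 2 := by
  rw [Real.negMulLog, show (1:ℝ)/32 = 32⁻¹ by norm_num, Real.log_inv, log32]; ring
lemma nml2 : Real.negMulLog ((1:ℝ)/16) = 1/4 * Real.log 2 := by
  rw [Real.negMulLog, show (1:ℝ)/16 = 16⁻¹ by norm_num, Real.log_inv,
    show (16:ℝ) = 2 ^ 4 by norm_num, Real.log_pow]; push_cast; ring
lemma nml4 : Real.negMulLog ((1:ℝ)/8) = 3/8 * Real.log 2 := by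
  rw [Real.negMulLog, show (1:ℝ)/8 = 8⁻¹ by norm_num, Real.log_inv,
    show (8:ℝ) = 2 ^ 3 by norm_num, Real.log_pow]; push_cast; ring
lemma nml8 : Real.negMulLog ((1:ℝ)/4) = 1/2 * Real.log 2 := by
  rw [Real.negMulLog, show (1:ℝ)/4 = 4⁻¹ by norm_num, Real.log_inv,
    show (4:ℝ) = 2 ^ 2 by norm_num, Real.log_pow]; push_cast; ring

lemma um_setOf (P : Om → Prop) [DecidablePred P] :
    um {ω : Om | P ω} = (32:ℝ≥0∞)⁻¹ * (Finset.univ.filter P).card := by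
  haveI : DecidablePred (· ∈ {ω : Om | P ω}) := fun ω => ‹DecidablePred P› ω
  have hf : (Finset.univ.filter fun x : Om => x ∈ {ω : Om | P ω}) = Finset.univ.filter P :=
    Finset.filter_congr fun x _ => by simp
  rw [um_apply, hf]

lemma inv32_mul8 : (32:ℝ≥0∞)⁻¹ * 8 = 4⁻¹ := by
  rw [show (32:ℝ≥0∞) = 4 * 8 by norm_num,
    ENNReal.mul_inv (by norm_num) (by norm_num), mul_assoc,
    ENNReal.inv_mul_cancel (by norm_num) (by norm_num), mul_one]

lemma ent_b1 : entH um (fun ω : Om => (g2 ω, (ω.2.1, g1 ω))) = 7/2 * Real.log 2 := by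
  rw [entH_eval_list (fun ω : Om => (g2 ω, (ω.2.1, g1 ω))) {2, 4}
    (fun k => if k = 2 then 8 else 4) (by decide) (by decide)]
  norm_num [nml2, nml4]
  try ring

lemma ent_b2 : entH um (fun ω : Om => (ω.1, (ω.2.1, g1 ω))) = 4 * Real.log 2 := by
  rw [entH_eval_list (fun ω : Om => (ω.1, (ω.2.1, g1 ω))) {2}
    (fun _ => 16) (by decide) (by decide)]
  norm_num [nml2]
  try ring

lemma ent_b3 : entH um (fun ω : Om => ((g2 ω, ω.1), (ω.2.1, g1 ω))) = 9/2 * Real.log 2 := by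
  rw [entH_eval_list (fun ω : Om => ((g2 ω, ω.1), (ω.2.1, g1 ω))) {1, 2}
    (fun k => if k = 1 then 16 else 8) (by decide) (by decide)]
  norm_num [nml1, nml2]
  try ring

lemma ent_b4 : entH um (fun ω : Om => (ω.2.1, g1 ω)) = 3 * Real.log 2 := by
  rw [entH_eval_list (fun ω : Om => (ω.2.1, g1 ω)) {4}
    (fun _ => 8) (by decide) (by decide)]
  norm_num [nml4]
  try ring

lemma ent_xy : entH um (fun ω : Om => (ω.1, ω.2.1)) = 4 * Real.log 2 := by
  rw [entH_eval_list (fun ω : Om => (ω.1, ω.2.1)) {2}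
    (fun _ => 16) (by decide) (by decide)]
  norm_num [nml2]
  try ring

lemma ent_yx : entH um (fun ω : Om => (ω.2.1, ω.1)) = 4 * Real.log 2 := by
  rw [entH_eval_list (fun ω : Om => (ω.2.1, ω.1)) {2}
    (fun _ => 16) (by decide) (by decide)]
  norm_num [nml2]
  try ring

lemma ent_My : entH um (fun ω : Om => ((g1 ω, g2 ω, g3 ω, g4 ω), ω.2.1))
    = 17/4 * Real.log 2 := by
  rw [entH_eval_list (fun ω : Om => ((g1 ω, g2 ω, g3 ω, g4 ω), ω.2.1)) {1, 2}
    (fun k => if k = 1 then 8 else 12) (by decide) (by decide)]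
  norm_num [nml1, nml2]
  try ring

lemma ent_xMy : entH um (fun ω : Om => ((ω.1, (g1 ω, g2 ω, g3 ω, g4 ω)), ω.2.1))
    = 9/2 * Real.log 2 := by
  rw [entH_eval_list (fun ω : Om => ((ω.1, (g1 ω, g2 ω, g3 ω, g4 ω)), ω.2.1)) {1, 2}
    (fun k => if k = 1 then 16 else 8) (by decide) (by decide)]
  norm_num [nml1, nml2]
  try ring

lemma ent_Mx : entH um (fun ω : Om => ((g1 ω, g2 ω, g3 ω, g4 ω), ω.1))
    = 7/2 * Real.log 2 := by
  rw [entH_eval_list (fun ω : Om => ((g1 ω, g2 ω, g3 ω, g4 ω), ω.1)) {2, 4}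
    (fun k => if k = 2 then 8 else 4) (by decide) (by decide)]
  norm_num [nml2, nml4]
  try ring

lemma ent_yMx : entH um (fun ω : Om => ((ω.2.1, (g1 ω, g2 ω, g3 ω, g4 ω)), ω.1))
    = 9/2 * Real.log 2 := by
  rw [entH_eval_list (fun ω : Om => ((ω.2.1, (g1 ω, g2 ω, g3 ω, g4 ω)), ω.1)) {1, 2}
    (fun k => if k = 1 then 16 else 8) (by decide) (by decide)]
  norm_num [nml1, nml2]
  try ring

lemma ent_x : entH um (fun ω : Om => ω.1) = 2 * Real.log 2 := by
  rw [entH_eval_list (fun ω : Om => ω.1) {8} (fun _ => 4) (by decide) (by decide)]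
  norm_num [nml8]
  try ring

lemma ent_y : entH um (fun ω : Om => ω.2.1) = 2 * Real.log 2 := by
  rw [entH_eval_list (fun ω : Om => ω.2.1) {8} (fun _ => 4) (by decide) (by decide)]
  norm_num [nml8]
  try ring


lemma card_fst_mem : ∀ p : Finset (Fin 4),
    (Finset.univ.filter fun ω : Om => ω.1 ∈ p).card = 8 * p.card := by decide
lemma card_snd_mem : ∀ q : Finset (Fin 4),
    (Finset.univ.filter fun ω : Om => ω.2.1 ∈ q).card = 8 * q.card := by decide
lemma card_both_mem : ∀ p q : Finset (Fin 4),
    (Finset.univ.filter fun ω : Om => ω.1 ∈ p ∧ ω.2.1 ∈ q).card = 2 * (p.card * q.card) := by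
  decide
lemma card_fst_eq : ∀ v : Fin 4, (Finset.univ.filter fun ω : Om => ω.1 = v).card = 8 := by decide
lemma card_snd_eq : ∀ v : Fin 4, (Finset.univ.filter fun ω : Om => ω.2.1 = v).card = 8 := by
  decide

lemma prod_eq (a b : ℕ) : (32:ℝ≥0∞)⁻¹ * ((2*(a*b) : ℕ) : ℝ≥0∞)
    = ((32:ℝ≥0∞)⁻¹ * ((8*a : ℕ) : ℝ≥0∞)) * ((32:ℝ≥0∞)⁻¹ * ((8*b : ℕ) : ℝ≥0∞)) := by
  push_cast
  have h64 : (32:ℝ≥0∞)⁻¹ * 64 = 2 := by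
    rw [show (64:ℝ≥0∞) = 32 * 2 by norm_num, ← mul_assoc,
      ENNReal.inv_mul_cancel (by norm_num) (by norm_num), one_mul]
  rw [← h64]
  ring

end EQAux

set_option maxHeartbeats 2000000 in
set_option maxRecDepth 20000 in
/-- Randomized protocol for two-bit (4-ary) EQ: there is a probability space carrying
independent uniform `X, Y` on the 4-element alphabet `A` together with a valid four-message
transcript `M = (M₁, M₂, M₃, M₄)` that computes `Z = 1_{X=Y}` at both terminals and whose
information cost satisfies `I(X ; M | Y) + I(Y ; M | X) ≤ (11/4) log 2`. -/


theorem quaternary_EQ_randomized_protocol_upper_bound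
    (A : Type) [Fintype A] [DecidableEq A]
    [MeasurableSpace A] [MeasurableSingletonClass A] (hA : Fintype.card A = 4) :
    ∃ (P : ProbSpace) (X Y : P.Ω → A) (M1 M2 M3 M4 : FinRV P.Ω),
      Measurable X ∧ Measurable Y ∧
      IndepFun X Y P.μ ∧
      (∀ a : A, P.μ (X ⁻¹' {a}) = (4 : ℝ≥0∞)⁻¹) ∧
      (∀ a : A, P.μ (Y ⁻¹' {a}) = (4 : ℝ≥0∞)⁻¹) ∧
      -- (i) the Markov conditions of a valid interactive protocol
      condMutInf P.μ M1.f Y X = 0 ∧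
      condMutInf P.μ M2.f X (fun ω => (Y ω, M1.f ω)) = 0 ∧
      condMutInf P.μ M3.f Y (fun ω => (X ω, (M1.f ω, M2.f ω))) = 0 ∧
      condMutInf P.μ M4.f X (fun ω => (Y ω, (M1.f ω, M2.f ω, M3.f ω))) = 0 ∧
      -- (ii) both parties can compute Z from their input and the transcript
      condEnt P.μ (fun ω => if X ω = Y ω then (1 : Fin 2) else 0)
        (fun ω => ((M1.f ω, M2.f ω, M3.f ω, M4.f ω), X ω)) = 0 ∧
      condEnt P.μ (fun ω => if X ω = Y ω then (1 : Fin 2) else 0)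
        (fun ω => ((M1.f ω, M2.f ω, M3.f ω, M4.f ω), Y ω)) = 0 ∧
      -- (iii) information cost at most (11/4) log 2
      condMutInf P.μ X (fun ω => (M1.f ω, M2.f ω, M3.f ω, M4.f ω)) Y
        + condMutInf P.μ Y (fun ω => (M1.f ω, M2.f ω, M3.f ω, M4.f ω)) X
        ≤ (11 / 4) * Real.log 2 := by
  classical
  obtain ⟨e⟩ : Nonempty (A ≃ Fin 4) := ⟨Fintype.equivFinOfCardEq hA⟩
  refine ⟨⟨EQAux.Om, inferInstance, EQAux.um, inferInstance⟩,
    fun ω => e.symm ω.1, fun ω => e.symm ω.2.1,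
    ⟨Fin 2, inferInstance, inferInstance, inferInstance, EQAux.g1, Measurable.of_discrete⟩,
    ⟨Fin 2, inferInstance, inferInstance, inferInstance, EQAux.g2, Measurable.of_discrete⟩,
    ⟨Fin 2, inferInstance, inferInstance, inferInstance, EQAux.g3, Measurable.of_discrete⟩,
    ⟨Fin 2, inferInstance, inferInstance, inferInstance, EQAux.g4, Measurable.of_discrete⟩,
    Measurable.of_discrete, Measurable.of_discrete, ?_, ?_, ?_, ?_, ?_, ?_, ?_, ?_, ?_, ?_⟩
  -- (indep)
  · have base : IndepFun (fun ω : EQAux.Om => ω.1) (fun ω : EQAux.Om => ω.2.1) EQAux.um := by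
      rw [ProbabilityTheory.indepFun_iff_measure_inter_preimage_eq_mul]
      intro s t _ _
      haveI ds : DecidablePred (· ∈ s) := Classical.decPred _
      haveI dt : DecidablePred (· ∈ t) := Classical.decPred _
      have h1 : (fun ω : EQAux.Om => ω.1) ⁻¹' s = {ω : EQAux.Om | ω.1 ∈ s} := rfl
      have h2 : (fun ω : EQAux.Om => ω.2.1) ⁻¹' t = {ω : EQAux.Om | ω.2.1 ∈ t} := rfl
      have h3 : {ω : EQAux.Om | ω.1 ∈ s} ∩ {ω : EQAux.Om | ω.2.1 ∈ t}
          = {ω : EQAux.Om | ω.1 ∈ s ∧ ω.2.1 ∈ t} := rfl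
      rw [h1, h2, h3, EQAux.um_setOf, EQAux.um_setOf, EQAux.um_setOf]
      have hfs : (Finset.univ.filter fun ω : EQAux.Om => ω.1 ∈ s)
          = Finset.univ.filter fun ω : EQAux.Om => ω.1 ∈ (Set.toFinite s).toFinset :=
        Finset.filter_congr fun ω _ => by simp [Set.Finite.mem_toFinset, Set.mem_setOf_eq]
      have hft : (Finset.univ.filter fun ω : EQAux.Om => ω.2.1 ∈ t)
          = Finset.univ.filter fun ω : EQAux.Om => ω.2.1 ∈ (Set.toFinite t).toFinset :=
        Finset.filter_congr fun ω _ => by simp [Set.Finite.mem_toFinset, Set.mem_setOf_eq]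
      have hfb : (Finset.univ.filter fun ω : EQAux.Om => ω.1 ∈ s ∧ ω.2.1 ∈ t)
          = Finset.univ.filter fun ω : EQAux.Om =>
            ω.1 ∈ (Set.toFinite s).toFinset ∧ ω.2.1 ∈ (Set.toFinite t).toFinset :=
        Finset.filter_congr fun ω _ => by simp [Set.Finite.mem_toFinset, Set.mem_setOf_eq]
      rw [hfs, hft, hfb, EQAux.card_fst_mem, EQAux.card_snd_mem, EQAux.card_both_mem]
      exact EQAux.prod_eq _ _
    exact base.comp Measurable.of_discrete Measurable.of_discrete
  -- (uniform X)
  · intro a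
    show EQAux.um ((fun ω : EQAux.Om => e.symm ω.1) ⁻¹' {a}) = 4⁻¹
    have h : ((fun ω : EQAux.Om => e.symm ω.1) ⁻¹' {a}) = {ω : EQAux.Om | ω.1 = e a} := by
      ext ω; simp [Equiv.symm_apply_eq]
    rw [h, EQAux.um_setOf, EQAux.card_fst_eq (e a)]
    rw [show ((8:ℕ) : ℝ≥0∞) = 8 by norm_num]
    exact EQAux.inv32_mul8
  -- (uniform Y)
  · intro a
    show EQAux.um ((fun ω : EQAux.Om => e.symm ω.2.1) ⁻¹' {a}) = 4⁻¹
    have h : ((fun ω : EQAux.Om => e.symm ω.2.1) ⁻¹' {a}) = {ω : EQAux.Om | ω.2.1 = e a} := by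
      ext ω; simp [Equiv.symm_apply_eq]
    rw [h, EQAux.um_setOf, EQAux.card_snd_eq (e a)]
    rw [show ((8:ℕ) : ℝ≥0∞) = 8 by norm_num]
    exact EQAux.inv32_mul8
  -- (i)(a)
  · show condMutInf EQAux.um EQAux.g1 (fun ω : EQAux.Om => e.symm ω.2.1)
      (fun ω : EQAux.Om => e.symm ω.1) = 0
    have hg : EQAux.g1 = fun ω : EQAux.Om =>
        (fun a : A => EQAux.d1 (e a)) ((fun ω : EQAux.Om => e.symm ω.1) ω) := by
      funext ω; simp [EQAux.g1]
    rw [hg]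
    exact EQAux.condMutInf_of_func EQAux.um (fun a : A => EQAux.d1 (e a))
      (fun ω : EQAux.Om => e.symm ω.2.1) (fun ω : EQAux.Om => e.symm ω.1)
  -- (i)(b)
  · show condMutInf EQAux.um EQAux.g2 (fun ω : EQAux.Om => e.symm ω.1)
      (fun ω : EQAux.Om => (e.symm ω.2.1, EQAux.g1 ω)) = 0
    simp only [condMutInf]
    have hinj : ∀ {α β : Type} (f : α → β), True := fun _ => trivial
    have hA1 : entH EQAux.um (fun ω : EQAux.Om => (EQAux.g2 ω, (e.symm ω.2.1, EQAux.g1 ω)))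
        = entH EQAux.um (fun ω : EQAux.Om => (EQAux.g2 ω, (ω.2.1, EQAux.g1 ω))) :=
      EQAux.entH_comp EQAux.um (fun p : Fin 2 × (Fin 4 × Fin 2) => (p.1, (e.symm p.2.1, p.2.2)))
        (fun a b h => by simp only [Prod.ext_iff, EmbeddingLike.apply_eq_iff_eq] at h ⊢; exact h)
        (fun ω : EQAux.Om => (EQAux.g2 ω, (ω.2.1, EQAux.g1 ω)))
    have hA2 : entH EQAux.um (fun ω : EQAux.Om => (e.symm ω.1, (e.symm ω.2.1, EQAux.g1 ω)))
        = entH EQAux.um (fun ω : EQAux.Om => (ω.1, (ω.2.1, EQAux.g1 ω))) :=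
      EQAux.entH_comp EQAux.um
        (fun p : Fin 4 × (Fin 4 × Fin 2) => (e.symm p.1, (e.symm p.2.1, p.2.2)))
        (fun a b h => by simp only [Prod.ext_iff, EmbeddingLike.apply_eq_iff_eq] at h ⊢; exact h)
        (fun ω : EQAux.Om => (ω.1, (ω.2.1, EQAux.g1 ω)))
    have hA3 : entH EQAux.um
        (fun ω : EQAux.Om => ((EQAux.g2 ω, e.symm ω.1), (e.symm ω.2.1, EQAux.g1 ω)))
        = entH EQAux.um (fun ω : EQAux.Om => ((EQAux.g2 ω, ω.1), (ω.2.1, EQAux.g1 ω))) :=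
      EQAux.entH_comp EQAux.um
        (fun p : (Fin 2 × Fin 4) × (Fin 4 × Fin 2) =>
          ((p.1.1, e.symm p.1.2), (e.symm p.2.1, p.2.2)))
        (fun a b h => by simp only [Prod.ext_iff, EmbeddingLike.apply_eq_iff_eq] at h ⊢; exact h)
        (fun ω : EQAux.Om => ((EQAux.g2 ω, ω.1), (ω.2.1, EQAux.g1 ω)))
    have hA4 : entH EQAux.um (fun ω : EQAux.Om => (e.symm ω.2.1, EQAux.g1 ω))
        = entH EQAux.um (fun ω : EQAux.Om => (ω.2.1, EQAux.g1 ω)) :=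
      EQAux.entH_comp EQAux.um (fun p : Fin 4 × Fin 2 => (e.symm p.1, p.2))
        (fun a b h => by simp only [Prod.ext_iff, EmbeddingLike.apply_eq_iff_eq] at h ⊢; exact h)
        (fun ω : EQAux.Om => (ω.2.1, EQAux.g1 ω))
    rw [hA1, hA2, hA3, hA4, EQAux.ent_b1, EQAux.ent_b2, EQAux.ent_b3, EQAux.ent_b4]
    ring
  -- (i)(c)
  · show condMutInf EQAux.um EQAux.g3 (fun ω : EQAux.Om => e.symm ω.2.1)
      (fun ω : EQAux.Om => (e.symm ω.1, (EQAux.g1 ω, EQAux.g2 ω))) = 0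
    have hg : EQAux.g3 = fun ω : EQAux.Om =>
        (fun p : A × (Fin 2 × Fin 2) => if p.2.2 = 1 then EQAux.d2 (e p.1) else 0)
        ((fun ω : EQAux.Om => (e.symm ω.1, (EQAux.g1 ω, EQAux.g2 ω))) ω) := by
      funext ω; simp [EQAux.g3]
    rw [hg]
    exact EQAux.condMutInf_of_func EQAux.um
      (fun p : A × (Fin 2 × Fin 2) => if p.2.2 = 1 then EQAux.d2 (e p.1) else 0)
      (fun ω : EQAux.Om => e.symm ω.2.1)
      (fun ω : EQAux.Om => (e.symm ω.1, (EQAux.g1 ω, EQAux.g2 ω)))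
  -- (i)(d)
  · show condMutInf EQAux.um EQAux.g4 (fun ω : EQAux.Om => e.symm ω.1)
      (fun ω : EQAux.Om => (e.symm ω.2.1, (EQAux.g1 ω, EQAux.g2 ω, EQAux.g3 ω))) = 0
    have hg : EQAux.g4 = fun ω : EQAux.Om =>
        (fun p : A × (Fin 2 × Fin 2 × Fin 2) =>
          if EQAux.d1 (e p.1) = p.2.1 ∧ p.2.2.1 = 1 ∧ EQAux.d2 (e p.1) = p.2.2.2
          then (1 : Fin 2) else 0)
        ((fun ω : EQAux.Om => (e.symm ω.2.1, (EQAux.g1 ω, EQAux.g2 ω, EQAux.g3 ω))) ω) := by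
      funext ω
      simp only [Equiv.apply_symm_apply]
      revert ω
      decide
    rw [hg]
    exact EQAux.condMutInf_of_func EQAux.um
      (fun p : A × (Fin 2 × Fin 2 × Fin 2) =>
        if EQAux.d1 (e p.1) = p.2.1 ∧ p.2.2.1 = 1 ∧ EQAux.d2 (e p.1) = p.2.2.2
        then (1 : Fin 2) else 0)
      (fun ω : EQAux.Om => e.symm ω.1)
      (fun ω : EQAux.Om => (e.symm ω.2.1, (EQAux.g1 ω, EQAux.g2 ω, EQAux.g3 ω)))
  -- (ii) Alice
  · show condEnt EQAux.um
      (fun ω : EQAux.Om => if e.symm ω.1 = e.symm ω.2.1 then (1 : Fin 2) else 0)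
      (fun ω : EQAux.Om => ((EQAux.g1 ω, EQAux.g2 ω, EQAux.g3 ω, EQAux.g4 ω), e.symm ω.1)) = 0
    have hz : (fun ω : EQAux.Om => if e.symm ω.1 = e.symm ω.2.1 then (1 : Fin 2) else 0)
        = fun ω : EQAux.Om =>
          (fun p : (Fin 2 × Fin 2 × Fin 2 × Fin 2) × A => p.1.2.2.2)
          ((fun ω : EQAux.Om =>
            ((EQAux.g1 ω, EQAux.g2 ω, EQAux.g3 ω, EQAux.g4 ω), e.symm ω.1)) ω) := by
      funext ω
      simp [EQAux.g4, EmbeddingLike.apply_eq_iff_eq]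
    rw [hz]
    exact EQAux.condEnt_of_func EQAux.um
      (fun p : (Fin 2 × Fin 2 × Fin 2 × Fin 2) × A => p.1.2.2.2)
      (fun ω : EQAux.Om => ((EQAux.g1 ω, EQAux.g2 ω, EQAux.g3 ω, EQAux.g4 ω), e.symm ω.1))
  -- (ii) Bob
  · show condEnt EQAux.um
      (fun ω : EQAux.Om => if e.symm ω.1 = e.symm ω.2.1 then (1 : Fin 2) else 0)
      (fun ω : EQAux.Om => ((EQAux.g1 ω, EQAux.g2 ω, EQAux.g3 ω, EQAux.g4 ω), e.symm ω.2.1)) = 0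
    have hz : (fun ω : EQAux.Om => if e.symm ω.1 = e.symm ω.2.1 then (1 : Fin 2) else 0)
        = fun ω : EQAux.Om =>
          (fun p : (Fin 2 × Fin 2 × Fin 2 × Fin 2) × A => p.1.2.2.2)
          ((fun ω : EQAux.Om =>
            ((EQAux.g1 ω, EQAux.g2 ω, EQAux.g3 ω, EQAux.g4 ω), e.symm ω.2.1)) ω) := by
      funext ω
      simp [EQAux.g4, EmbeddingLike.apply_eq_iff_eq]
    rw [hz]
    exact EQAux.condEnt_of_func EQAux.um
      (fun p : (Fin 2 × Fin 2 × Fin 2 × Fin 2) × A => p.1.2.2.2)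
      (fun ω : EQAux.Om => ((EQAux.g1 ω, EQAux.g2 ω, EQAux.g3 ω, EQAux.g4 ω), e.symm ω.2.1))
  -- (iii)
  · show condMutInf EQAux.um (fun ω : EQAux.Om => e.symm ω.1)
        (fun ω : EQAux.Om => (EQAux.g1 ω, EQAux.g2 ω, EQAux.g3 ω, EQAux.g4 ω))
        (fun ω : EQAux.Om => e.symm ω.2.1)
      + condMutInf EQAux.um (fun ω : EQAux.Om => e.symm ω.2.1)
        (fun ω : EQAux.Om => (EQAux.g1 ω, EQAux.g2 ω, EQAux.g3 ω, EQAux.g4 ω))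
        (fun ω : EQAux.Om => e.symm ω.1)
      ≤ 11 / 4 * Real.log 2
    simp only [condMutInf]
    have s1 : entH EQAux.um (fun ω : EQAux.Om => (e.symm ω.1, e.symm ω.2.1))
        = entH EQAux.um (fun ω : EQAux.Om => (ω.1, ω.2.1)) :=
      EQAux.entH_comp EQAux.um (fun p : Fin 4 × Fin 4 => ((e.symm p.1 : A), (e.symm p.2 : A)))
        (fun a b h => by simp only [Prod.ext_iff, EmbeddingLike.apply_eq_iff_eq] at h ⊢; exact h)
        (fun ω : EQAux.Om => (ω.1, ω.2.1))
    have s2 : entH EQAux.um (fun ω : EQAux.Om =>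
          ((EQAux.g1 ω, EQAux.g2 ω, EQAux.g3 ω, EQAux.g4 ω), e.symm ω.2.1))
        = entH EQAux.um (fun ω : EQAux.Om =>
          ((EQAux.g1 ω, EQAux.g2 ω, EQAux.g3 ω, EQAux.g4 ω), ω.2.1)) :=
      EQAux.entH_comp EQAux.um
        (fun p : (Fin 2 × Fin 2 × Fin 2 × Fin 2) × Fin 4 => (p.1, (e.symm p.2 : A)))
        (fun a b h => by simp only [Prod.ext_iff, EmbeddingLike.apply_eq_iff_eq] at h ⊢; exact h)
        (fun ω : EQAux.Om => ((EQAux.g1 ω, EQAux.g2 ω, EQAux.g3 ω, EQAux.g4 ω), ω.2.1))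
    have s3 : entH EQAux.um (fun ω : EQAux.Om =>
          ((e.symm ω.1, (EQAux.g1 ω, EQAux.g2 ω, EQAux.g3 ω, EQAux.g4 ω)), e.symm ω.2.1))
        = entH EQAux.um (fun ω : EQAux.Om =>
          ((ω.1, (EQAux.g1 ω, EQAux.g2 ω, EQAux.g3 ω, EQAux.g4 ω)), ω.2.1)) :=
      EQAux.entH_comp EQAux.um
        (fun p : (Fin 4 × (Fin 2 × Fin 2 × Fin 2 × Fin 2)) × Fin 4 =>
          (((e.symm p.1.1 : A), p.1.2), (e.symm p.2 : A)))
        (fun a b h => by simp only [Prod.ext_iff, EmbeddingLike.apply_eq_iff_eq] at h ⊢; exact h)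
        (fun ω : EQAux.Om => ((ω.1, (EQAux.g1 ω, EQAux.g2 ω, EQAux.g3 ω, EQAux.g4 ω)), ω.2.1))
    have s4 : entH EQAux.um (fun ω : EQAux.Om => e.symm ω.2.1)
        = entH EQAux.um (fun ω : EQAux.Om => ω.2.1) :=
      EQAux.entH_comp EQAux.um (fun v : Fin 4 => (e.symm v : A)) (fun a b h => by
        simpa using e.symm.injective h) (fun ω : EQAux.Om => ω.2.1)
    have s5 : entH EQAux.um (fun ω : EQAux.Om => (e.symm ω.2.1, e.symm ω.1))
        = entH EQAux.um (fun ω : EQAux.Om => (ω.2.1, ω.1)) :=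
      EQAux.entH_comp EQAux.um (fun p : Fin 4 × Fin 4 => ((e.symm p.1 : A), (e.symm p.2 : A)))
        (fun a b h => by simp only [Prod.ext_iff, EmbeddingLike.apply_eq_iff_eq] at h ⊢; exact h)
        (fun ω : EQAux.Om => (ω.2.1, ω.1))
    have s6 : entH EQAux.um (fun ω : EQAux.Om =>
          ((EQAux.g1 ω, EQAux.g2 ω, EQAux.g3 ω, EQAux.g4 ω), e.symm ω.1))
        = entH EQAux.um (fun ω : EQAux.Om =>
          ((EQAux.g1 ω, EQAux.g2 ω, EQAux.g3 ω, EQAux.g4 ω), ω.1)) :=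
      EQAux.entH_comp EQAux.um
        (fun p : (Fin 2 × Fin 2 × Fin 2 × Fin 2) × Fin 4 => (p.1, (e.symm p.2 : A)))
        (fun a b h => by simp only [Prod.ext_iff, EmbeddingLike.apply_eq_iff_eq] at h ⊢; exact h)
        (fun ω : EQAux.Om => ((EQAux.g1 ω, EQAux.g2 ω, EQAux.g3 ω, EQAux.g4 ω), ω.1))
    have s7 : entH EQAux.um (fun ω : EQAux.Om =>
          ((e.symm ω.2.1, (EQAux.g1 ω, EQAux.g2 ω, EQAux.g3 ω, EQAux.g4 ω)), e.symm ω.1))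
        = entH EQAux.um (fun ω : EQAux.Om =>
          ((ω.2.1, (EQAux.g1 ω, EQAux.g2 ω, EQAux.g3 ω, EQAux.g4 ω)), ω.1)) :=
      EQAux.entH_comp EQAux.um
        (fun p : (Fin 4 × (Fin 2 × Fin 2 × Fin 2 × Fin 2)) × Fin 4 =>
          (((e.symm p.1.1 : A), p.1.2), (e.symm p.2 : A)))
        (fun a b h => by simp only [Prod.ext_iff, EmbeddingLike.apply_eq_iff_eq] at h ⊢; exact h)
        (fun ω : EQAux.Om => ((ω.2.1, (EQAux.g1 ω, EQAux.g2 ω, EQAux.g3 ω, EQAux.g4 ω)), ω.1))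
    have s8 : entH EQAux.um (fun ω : EQAux.Om => e.symm ω.1)
        = entH EQAux.um (fun ω : EQAux.Om => ω.1) :=
      EQAux.entH_comp EQAux.um (fun v : Fin 4 => (e.symm v : A)) (fun a b h => by
        simpa using e.symm.injective h) (fun ω : EQAux.Om => ω.1)
    rw [s1, s2, s3, s4, s5, s6, s7, s8, EQAux.ent_xy, EQAux.ent_My, EQAux.ent_xMy,
      EQAux.ent_y, EQAux.ent_yx, EQAux.ent_Mx, EQAux.ent_yMx, EQAux.ent_x]
    linarith
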